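/- If F is a field in which every unit is a square, then the canonical epimorphism K^MW_n(F) → K^M_n(F) is an isomorphism for all n ≥ 0, and the canonical epimorphism K^MW_n(F) → K^W_n(F) is an isomorphism for all n < 0. -/

import Mathlib

noncomputable section

/-- Generators of the Milnor–Witt K-theory ring: a symbol `[u]` for each unit `u`
and the element `η`. -/
inductive MWGen (F : Type) [Field F] : Type
  | of : Fˣ → MWGen F
  | eta : MWGen F

/-- The defining relations KMW1–KMW4 of Milnor–Witt K-theory, imposed on the free
(noncommutative) ℤ-algebra on the generators. -/
inductive MWRel (F : Type) [Field F] :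
    FreeAlgebra ℤ (MWGen F) → FreeAlgebra ℤ (MWGen F) → Prop
  | steinberg (a : Fˣ) (h1 : (a : F) ≠ 1) :
      MWRel F
        (FreeAlgebra.ι ℤ (MWGen.of a) *
          FreeAlgebra.ι ℤ (MWGen.of (Units.mk0 (1 - (a : F)) (sub_ne_zero_of_ne h1.symm))))
        0
  | mul_rel (a b : Fˣ) :
      MWRel F (FreeAlgebra.ι ℤ (MWGen.of (a * b)))
        (FreeAlgebra.ι ℤ (MWGen.of a) + FreeAlgebra.ι ℤ (MWGen.of b) +
          FreeAlgebra.ι ℤ MWGen.eta * FreeAlgebra.ι ℤ (MWGen.of a) *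
            FreeAlgebra.ι ℤ (MWGen.of b))
  | comm_rel (u : Fˣ) :
      MWRel F (FreeAlgebra.ι ℤ MWGen.eta * FreeAlgebra.ι ℤ (MWGen.of u))
        (FreeAlgebra.ι ℤ (MWGen.of u) * FreeAlgebra.ι ℤ MWGen.eta)
  | hyp :
      MWRel F
        (FreeAlgebra.ι ℤ MWGen.eta *
          (FreeAlgebra.ι ℤ MWGen.eta * FreeAlgebra.ι ℤ (MWGen.of (-1)) + 2))
        0

/-- The Milnor–Witt K-theory ring `K^MW_*(F)` (all degrees together). -/
def KMW (F : Type) [Field F] : Type := RingQuot (MWRel F)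

instance (F : Type) [Field F] : Ring (KMW F) := inferInstanceAs (Ring (RingQuot (MWRel F)))

/-- The symbol `[u] ∈ K^MW_1(F)`. -/
def mw {F : Type} [Field F] (u : Fˣ) : KMW F :=
  RingQuot.mkRingHom (MWRel F) (FreeAlgebra.ι ℤ (MWGen.of u))

/-- The element `η ∈ K^MW_{-1}(F)`. -/
def mweta (F : Type) [Field F] : KMW F :=
  RingQuot.mkRingHom (MWRel F) (FreeAlgebra.ι ℤ MWGen.eta)

/-- The degree-`n` homogeneous component of `K^MW_*(F)`: the additive subgroup spanned
by the monomials `η^m [u₁]⋯[u_r]` with `r - m = n`. -/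
def KMWcomp (F : Type) [Field F] (n : ℤ) : AddSubgroup (KMW F) :=
  AddSubgroup.closure {x | ∃ (m r : ℕ) (v : Fin r → Fˣ),
    (r : ℤ) - (m : ℤ) = n ∧ x = (mweta F) ^ m * (List.ofFn fun i => mw (v i)).prod}

/-- The hyperbolic element `h = η[-1] + 2 ∈ K^MW_0(F)`. -/
def hKMW (F : Type) [Field F] : KMW F := mweta F * mw (-1) + 2

/-- Witt K-theory `K^W_*(F) := K^MW_*(F)/(h)`. -/
def KW (F : Type) [Field F] : Type :=
  RingQuot (fun x y : KMW F => x = hKMW F ∧ y = 0)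

instance (F : Type) [Field F] : Ring (KW F) :=
  inferInstanceAs (Ring (RingQuot (fun x y : KMW F => x = hKMW F ∧ y = 0)))

/-- The quotient map `K^MW_*(F) → K^W_*(F)`. -/
def kwq (F : Type) [Field F] : KMW F →+* KW F :=
  RingQuot.mkRingHom (fun x y : KMW F => x = hKMW F ∧ y = 0)

/-- The class `⟦a⟧ ∈ K^W_1(F)` of the symbol `[a]`. -/
def kw {F : Type} [Field F] (a : Fˣ) : KW F := kwq F (mw a)

/-- The degree-`n` homogeneous component of `K^W_*(F)`. -/
def KWcomp (F : Type) [Field F] (n : ℤ) : AddSubgroup (KW F) :=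
  AddSubgroup.map (kwq F).toAddMonoidHom (KMWcomp F n)

/-- Milnor K-theory realized as the quotient `K^MW_*(F)/(η)`. -/
def KM (F : Type) [Field F] : Type :=
  RingQuot (fun x y : KMW F => x = mweta F ∧ y = 0)

instance (F : Type) [Field F] : Ring (KM F) :=
  inferInstanceAs (Ring (RingQuot (fun x y : KMW F => x = mweta F ∧ y = 0)))

/-- The quotient map `K^MW_*(F) → K^M_*(F)`. -/
def kmq (F : Type) [Field F] : KMW F →+* KM F :=
  RingQuot.mkRingHom (fun x y : KMW F => x = mweta F ∧ y = 0)

/-- The degree-`n` homogeneous component of `K^M_*(F)`. -/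
def KMcomp (F : Type) [Field F] (n : ℤ) : AddSubgroup (KM F) :=
  AddSubgroup.map (kmq F).toAddMonoidHom (KMWcomp F n)

namespace MWProof
variable {F : Type} [Field F]

lemma mw_mul (a b : Fˣ) :
    mw (a * b) = mw a + mw b + mweta F * mw a * mw b := by
  have h := RingQuot.mkRingHom_rel (MWRel.mul_rel (F := F) a b)
  simp only [map_add, map_mul] at h
  exact h

lemma eta_comm (u : Fˣ) : mweta F * mw u = mw u * mweta F := by
  have h := RingQuot.mkRingHom_rel (MWRel.comm_rel (F := F) u)
  simp only [map_mul] at h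
  exact h

lemma steinberg (a : Fˣ) (h1 : (a : F) ≠ 1) :
    mw a * mw (Units.mk0 (1 - (a : F)) (sub_ne_zero_of_ne h1.symm)) = 0 := by
  have h := RingQuot.mkRingHom_rel (MWRel.steinberg (F := F) a h1)
  simp only [map_mul, map_zero] at h
  exact h

lemma hyp_rel : mweta F * (mweta F * mw (-1) + 2) = 0 := by
  have h := RingQuot.mkRingHom_rel (MWRel.hyp (F := F))
  simp only [map_add, map_mul, map_ofNat, map_zero] at h
  exact h

end MWProof
namespace MWProof
variable {F : Type} [Field F]

/-- `S a = η [a]`. -/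
def S (a : Fˣ) : KMW F := mweta F * mw a

lemma eta_swap (a b : Fˣ) :
    mweta F * mw a * mw b = mweta F * mw b * mw a := by
  have h1 := mw_mul a b
  have h2 := mw_mul b a
  rw [mul_comm b a] at h2
  have h3 := h1.symm.trans h2
  rw [add_comm (mw b) (mw a)] at h3
  exact add_left_cancel h3

lemma S_mul_S (a b : Fˣ) :
    S a * S b = mweta F * (mweta F * mw a * mw b) := by
  unfold S
  rw [mul_assoc, ← mul_assoc (mw a), ← eta_comm a]

lemma S_comm (a b : Fˣ) : S a * S b = S b * S a := by
  rw [S_mul_S, S_mul_S, eta_swap]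

lemma S_mul (a b : Fˣ) : S (a * b) = S a + S b + S a * S b := by
  rw [S_mul_S]
  unfold S
  rw [mw_mul a b, mul_add, mul_add, ← mul_assoc]

lemma S_one_right (a : Fˣ) : S a * S 1 = -S 1 := by
  have h : S (a * 1) = S a + S 1 + S a * S 1 := S_mul a 1
  rw [mul_one, add_assoc] at h
  have h2 : S 1 + S a * S 1 = 0 := (left_eq_add.mp h).symm ▸ rfl
  exact eq_neg_of_add_eq_zero_right h2

end MWProof
namespace MWProof
variable {F : Type} [Field F]

lemma S_neg_one_right (a : Fˣ) : S a * S (-1) = -(2 * S a) := by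
  have h := hyp_rel (F := F)
  rw [mul_add] at h
  have h2 : (mweta F * (mweta F * mw (-1)) + mweta F * 2) * mw a = 0 := by
    rw [h, zero_mul]
  rw [S_comm, S_mul_S]
  have h3 : mweta F * (mweta F * mw (-1) * mw a) + 2 * S a = 0 := by
    rw [← h2]; unfold S; noncomm_ring
  exact eq_neg_of_add_eq_zero_left h3

/-- Steinberg relation in `S`-form. -/
lemma S_steinberg (a b : Fˣ) (h1 : (a : F) ≠ 1) (hb : (b : F) = 1 - (a : F)) :
    S a * S b = 0 := by
  have hb' : b = Units.mk0 (1 - (a : F)) (sub_ne_zero_of_ne h1.symm) :=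
    Units.ext (by simpa using hb)
  rw [S_mul_S, hb', mul_assoc (mweta F) (mw a), steinberg a h1, mul_zero, mul_zero]

lemma S_inv (a : Fˣ) : S a + S a⁻¹ + S a * S a⁻¹ = S 1 := by
  have h := S_mul a a⁻¹
  rw [mul_inv_cancel] at h
  exact h.symm

/-- Milnor's trick: `S a * S (-a) = - S 1` for `a ≠ 1`. -/
lemma S_neg_self (a : Fˣ) (h1 : (a : F) ≠ 1) : S a * S (-a) = -S 1 := by
  have hinv1 : ((a⁻¹ : Fˣ) : F) ≠ 1 := by
    simp only [Units.val_inv_eq_inv_val]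
    intro h
    exact h1 (by field_simp at h; simp [h])
  set b : Fˣ := Units.mk0 (1 - (a : F)) (sub_ne_zero_of_ne h1.symm) with hbdef
  set c : Fˣ := Units.mk0 (1 - ((a⁻¹ : Fˣ) : F)) (sub_ne_zero_of_ne hinv1.symm) with hcdef
  have hbc : (-a) * c = b := by
    apply Units.ext
    have ha0 : (a : F) ≠ 0 := a.ne_zero
    push_cast [hcdef, hbdef, Units.val_inv_eq_inv_val, Units.val_mk0]
    field_simp
    ring
  have hneg : -a = b * c⁻¹ := by rw [← hbc, mul_inv_cancel_right]
  have hab : S a * S b = 0 := S_steinberg a b h1 rfl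
  have hic : S a⁻¹ * S c = 0 := S_steinberg a⁻¹ c hinv1 rfl
  have hac : S a * S c = -S 1 := by
    have h6 : S a = S 1 - S a⁻¹ - S a * S a⁻¹ := by rw [← S_inv a]; abel
    calc S a * S c = (S 1 - S a⁻¹ - S a * S a⁻¹) * S c := by rw [← h6]
      _ = S 1 * S c - S a⁻¹ * S c - S a * (S a⁻¹ * S c) := by noncomm_ring
      _ = S 1 * S c := by rw [hic, mul_zero, sub_zero, sub_zero]
      _ = S c * S 1 := S_comm 1 c
      _ = -S 1 := S_one_right c
  have hacinv : S a * S c⁻¹ = -S 1 := by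
    have h6 : S c⁻¹ = S 1 - S c - S c * S c⁻¹ := by rw [← S_inv c]; abel
    calc S a * S c⁻¹ = S a * (S 1 - S c - S c * S c⁻¹) := by rw [← h6]
      _ = S a * S 1 - S a * S c - (S a * S c) * S c⁻¹ := by noncomm_ring
      _ = -S 1 - (-S 1) - (-S 1) * S c⁻¹ := by rw [S_one_right, hac]
      _ = S 1 * S c⁻¹ := by noncomm_ring
      _ = S c⁻¹ * S 1 := S_comm 1 c⁻¹
      _ = -S 1 := S_one_right c⁻¹
  calc S a * S (-a) = S a * (S b + S c⁻¹ + S b * S c⁻¹) := by rw [hneg, S_mul]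
    _ = S a * S b + S a * S c⁻¹ + (S a * S b) * S c⁻¹ := by noncomm_ring
    _ = 0 + -S 1 + 0 * S c⁻¹ := by rw [hab, hacinv]
    _ = -S 1 := by noncomm_ring

end MWProof
namespace MWProof
variable {F : Type} [Field F]

lemma S_one_eq_zero : S (1 : Fˣ) = 0 := by
  have h1 : S (-1 : Fˣ) * S (1 : Fˣ) = -S 1 := S_one_right (-1)
  have h2 : S (1 : Fˣ) * S (-1 : Fˣ) = -(2 * S 1) := S_neg_one_right 1
  rw [S_comm] at h1
  rw [h1] at h2
  have h3 : S (1 : Fˣ) = 2 * S 1 := neg_injective h2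
  rw [two_mul] at h3
  exact right_eq_add.mp h3

lemma S_mul_S_neg (a : Fˣ) : S a * S (-a) = 0 := by
  by_cases h1 : (a : F) = 1
  · have : a = 1 := Units.ext (by simpa using h1)
    rw [this, S_one_eq_zero, zero_mul]
  · rw [S_neg_self a h1, S_one_eq_zero, neg_zero]

lemma S_neg (a : Fˣ) : S (-a) = S (-1) - S a := by
  have h : S ((-1) * a) = S (-1) + S a + S (-1) * S a := S_mul (-1) a
  rw [neg_one_mul] at h
  rw [h, S_comm, S_neg_one_right]
  noncomm_ring

lemma S_sq (v : Fˣ) : S (v * v) = 0 := by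
  have h : S (v * v) = S v + S v + S v * S v := S_mul v v
  have h3 : S v = S (-1) - S (-v) := by rw [S_neg v]; abel
  have h2 : S v * S v = S v * S (-1) - S v * S (-v) := by
    nth_rewrite 2 [h3]
    rw [mul_sub]
  rw [S_mul_S_neg v, S_neg_one_right] at h2
  rw [h, h2]
  noncomm_ring

/-- Key: if every unit is a square then `η [u] = 0`. -/
lemma eta_mw (hsq : ∀ u : Fˣ, ∃ v : Fˣ, v ^ 2 = u) (u : Fˣ) :
    mweta F * mw u = 0 := by
  obtain ⟨v, hv⟩ := hsq u
  have : u = v * v := by rw [← hv, sq]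
  have h := S_sq v
  rw [← this] at h
  exact h

/-- Key: if every unit is a square then `2 η = 0`. -/
lemma two_eta (hsq : ∀ u : Fˣ, ∃ v : Fˣ, v ^ 2 = u) :
    (2 : KMW F) * mweta F = 0 := by
  have h := hyp_rel (F := F)
  rw [mul_add, ← mul_assoc, mul_assoc (mweta F) (mweta F) (mw (-1))] at h
  rw [eta_mw hsq (-1), mul_zero, zero_add] at h
  rw [← h]
  rw [mul_two, two_mul]

end MWProof
namespace MWProof
variable {F : Type} [Field F]

/-- Vanishing: any monomial with at least one `η` and one symbol is zero. -/
lemma eta_pow_vanish (hsq : ∀ u : Fˣ, ∃ v : Fˣ, v ^ 2 = u)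
    (m r : ℕ) (v : Fin r → Fˣ) (hm : 1 ≤ m) (hr : 1 ≤ r) :
    mweta F ^ m * (List.ofFn fun i => mw (v i)).prod = 0 := by
  obtain ⟨m', rfl⟩ : ∃ m', m = m' + 1 := ⟨m - 1, by omega⟩
  obtain ⟨r', rfl⟩ : ∃ r', r = r' + 1 := ⟨r - 1, by omega⟩
  rw [List.ofFn_succ, List.prod_cons, pow_succ]
  rw [mul_assoc, ← mul_assoc (mweta F) (mw (v 0)), eta_mw hsq, zero_mul, mul_zero]

/-- The generator assignment of the retraction: `[u] ↦ [u]`, `η ↦ 0`. -/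
def phiGen : MWGen F → KMW F
  | .of u => mw u
  | .eta => 0

def phiAux : FreeAlgebra ℤ (MWGen F) →ₐ[ℤ] KMW F := FreeAlgebra.lift ℤ phiGen

lemma phiAux_rel (hsq : ∀ u : Fˣ, ∃ v : Fˣ, v ^ 2 = u) :
    ∀ ⦃x y⦄, MWRel F x y → (phiAux (F := F)).toRingHom x = (phiAux (F := F)).toRingHom y := by
  intro x y h
  induction h with
  | steinberg a h1 =>
      simp only [AlgHom.toRingHom_eq_coe, RingHom.coe_coe, map_mul, map_zero, phiAux,
        FreeAlgebra.lift_ι_apply, phiGen]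
      have hb' : (Units.mk0 (1 - (a : F)) (sub_ne_zero_of_ne h1.symm) : F) = 1 - (a : F) := rfl
      have := steinberg a h1
      exact this
  | mul_rel a b =>
      simp only [AlgHom.toRingHom_eq_coe, RingHom.coe_coe, map_mul, map_add, phiAux,
        FreeAlgebra.lift_ι_apply, phiGen]
      rw [mw_mul a b, eta_mw hsq a]
      simp
  | comm_rel u =>
      simp only [AlgHom.toRingHom_eq_coe, RingHom.coe_coe, map_mul, phiAux,
        FreeAlgebra.lift_ι_apply, phiGen]
      rw [zero_mul, mul_zero]
  | hyp =>
      simp only [AlgHom.toRingHom_eq_coe, RingHom.coe_coe, map_mul, map_add, map_zero, phiAux,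
        FreeAlgebra.lift_ι_apply, phiGen]
      rw [zero_mul]

/-- The retraction `K^MW → K^MW` killing `η`. -/
def phi (hsq : ∀ u : Fˣ, ∃ v : Fˣ, v ^ 2 = u) : KMW F →+* KMW F :=
  RingQuot.lift ⟨(phiAux (F := F)).toRingHom, phiAux_rel hsq⟩

lemma phi_mw (hsq : ∀ u : Fˣ, ∃ v : Fˣ, v ^ 2 = u) (u : Fˣ) :
    phi hsq (mw u) = mw u := by
  have h := RingQuot.lift_mkRingHom_apply (phiAux (F := F)).toRingHom (phiAux_rel hsq)
      (FreeAlgebra.ι ℤ (MWGen.of u))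
  exact h.trans (by simp [phiAux, FreeAlgebra.lift_ι_apply, phiGen])

lemma phi_eta (hsq : ∀ u : Fˣ, ∃ v : Fˣ, v ^ 2 = u) :
    phi hsq (mweta F) = 0 := by
  have h := RingQuot.lift_mkRingHom_apply (phiAux (F := F)).toRingHom (phiAux_rel hsq)
      (FreeAlgebra.ι ℤ MWGen.eta)
  exact h.trans (by simp [phiAux, FreeAlgebra.lift_ι_apply, phiGen])

/-- The section `K^M → K^MW`. -/
def sKM (hsq : ∀ u : Fˣ, ∃ v : Fˣ, v ^ 2 = u) : KM F →+* KMW F :=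
  RingQuot.lift ⟨phi hsq, by
    rintro x y ⟨rfl, rfl⟩
    rw [phi_eta hsq, map_zero]⟩

lemma sKM_kmq (hsq : ∀ u : Fˣ, ∃ v : Fˣ, v ^ 2 = u) (x : KMW F) :
    sKM hsq (kmq F x) = phi hsq x := by
  exact RingQuot.lift_mkRingHom_apply (phi hsq) (by
    rintro x y ⟨rfl, rfl⟩
    rw [phi_eta hsq, map_zero]) x

end MWProof
namespace MWProof
variable {F : Type} [Field F]

def chiGen : MWGen F → Polynomial (ZMod 2)
  | .of _ => 0
  | .eta => Polynomial.X

def chiAux (F : Type) [Field F] : FreeAlgebra ℤ (MWGen F) →ₐ[ℤ] Polynomial (ZMod 2) :=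
  FreeAlgebra.lift ℤ chiGen

lemma two_eq_zero : (2 : Polynomial (ZMod 2)) = 0 := by
  calc (2 : Polynomial (ZMod 2)) = Polynomial.C 1 + Polynomial.C 1 := by
        rw [Polynomial.C_1, one_add_one_eq_two]
    _ = Polynomial.C (1 + 1) := (Polynomial.C_add).symm
    _ = Polynomial.C 0 := by norm_num; decide
    _ = 0 := Polynomial.C_0

lemma chiAux_rel : ∀ ⦃x y⦄, MWRel F x y →
    (chiAux F).toRingHom x = (chiAux F).toRingHom y := by
  intro x y h
  induction h with
  | steinberg a h1 =>
      simp [chiAux, FreeAlgebra.lift_ι_apply, chiGen]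
  | mul_rel a b =>
      simp [chiAux, FreeAlgebra.lift_ι_apply, chiGen]
  | comm_rel u =>
      simp [chiAux, FreeAlgebra.lift_ι_apply, chiGen]
  | hyp =>
      simp only [AlgHom.toRingHom_eq_coe, RingHom.coe_coe, map_mul, map_add, map_zero,
        map_ofNat, chiAux, FreeAlgebra.lift_ι_apply, chiGen]
      rw [mul_zero, zero_add, two_eq_zero, mul_zero]

def chi (F : Type) [Field F] : KMW F →+* Polynomial (ZMod 2) :=
  RingQuot.lift ⟨(chiAux F).toRingHom, chiAux_rel⟩

lemma chi_mw (u : Fˣ) : chi F (mw u) = 0 := by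
  have h := RingQuot.lift_mkRingHom_apply (chiAux F).toRingHom (chiAux_rel (F := F))
      (FreeAlgebra.ι ℤ (MWGen.of u))
  exact h.trans (by simp [chiAux, FreeAlgebra.lift_ι_apply, chiGen])

lemma chi_eta : chi F (mweta F) = Polynomial.X := by
  have h := RingQuot.lift_mkRingHom_apply (chiAux F).toRingHom (chiAux_rel (F := F))
      (FreeAlgebra.ι ℤ MWGen.eta)
  exact h.trans (by simp [chiAux, FreeAlgebra.lift_ι_apply, chiGen])

lemma chi_h : chi F (hKMW F) = 0 := by
  rw [hKMW, map_add, map_mul, chi_eta, chi_mw, mul_zero, zero_add, map_ofNat, two_eq_zero]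

def chiKW (F : Type) [Field F] : KW F →+* Polynomial (ZMod 2) :=
  RingQuot.lift ⟨chi F, by rintro x y ⟨rfl, rfl⟩; rw [chi_h, map_zero]⟩

lemma chiKW_kwq (x : KMW F) : chiKW F (kwq F x) = chi F x :=
  RingQuot.lift_mkRingHom_apply (chi F)
    (by rintro x y ⟨rfl, rfl⟩; rw [chi_h, map_zero]) x

end MWProof
namespace MWProof
variable {F : Type} [Field F]

lemma phi_fix (hsq : ∀ u : Fˣ, ∃ v : Fˣ, v ^ 2 = u) {n : ℤ} (hn : 0 ≤ n)
    {x : KMW F} (hx : x ∈ KMWcomp F n) : phi hsq x = x := by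
  unfold KMWcomp at hx
  induction hx using AddSubgroup.closure_induction with
  | mem x hx =>
      obtain ⟨m, r, v, hmr, rfl⟩ := hx
      rcases Nat.eq_zero_or_pos m with hm | hm
      · subst hm
        simp only [pow_zero, one_mul, map_list_prod, List.map_ofFn]
        congr 1
        congr 1
        funext i
        exact phi_mw hsq (v i)
      · have hr : 1 ≤ r := by omega
        rw [eta_pow_vanish hsq m r v hm hr, map_zero]
  | zero => rw [map_zero]
  | add x y _ _ hx hy => rw [map_add, hx, hy]
  | neg x _ hx => rw [map_neg, hx]

lemma comp_neg {n : ℤ} (hn : n < 0) {x : KMW F} (hx : x ∈ KMWcomp F n)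
    (hsq : ∀ u : Fˣ, ∃ v : Fˣ, v ^ 2 = u) :
    ∃ a : ℤ, x = a • mweta F ^ n.natAbs := by
  unfold KMWcomp at hx
  induction hx using AddSubgroup.closure_induction with
  | mem x hx =>
      obtain ⟨m, r, v, hmr, rfl⟩ := hx
      rcases Nat.eq_zero_or_pos r with hr | hr
      · subst hr
        have hm : m = n.natAbs := by omega
        refine ⟨1, ?_⟩
        subst hm
        simp [List.ofFn_zero]
      · have hm : 1 ≤ m := by omega
        exact ⟨0, by rw [eta_pow_vanish hsq m r v hm hr, zero_smul]⟩
  | zero => exact ⟨0, by rw [zero_smul]⟩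
  | add x y _ _ hx hy =>
      obtain ⟨a, rfl⟩ := hx
      obtain ⟨b, rfl⟩ := hy
      exact ⟨a + b, by rw [add_smul]⟩
  | neg x _ hx =>
      obtain ⟨a, rfl⟩ := hx
      exact ⟨-a, by rw [neg_smul]⟩

lemma two_eta_pow (hsq : ∀ u : Fˣ, ∃ v : Fˣ, v ^ 2 = u) (k : ℕ) (hk : 1 ≤ k) :
    (2 : ℤ) • mweta F ^ k = 0 := by
  obtain ⟨k', rfl⟩ : ∃ k', k = k' + 1 := ⟨k - 1, by omega⟩
  rw [zsmul_eq_mul, pow_succ]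
  have h2 : ((2 : ℤ) : KMW F) = 2 := by norm_num
  have hcomm : (2 : KMW F) * mweta F ^ k' = mweta F ^ k' * 2 := by
    rw [two_mul, mul_two]
  rw [h2, ← mul_assoc, hcomm, mul_assoc, two_eta hsq, mul_zero]

end MWProof
theorem stmt15 (F : Type) [Field F] (hsq : ∀ u : Fˣ, ∃ v : Fˣ, v ^ 2 = u) :
    (∀ n : ℤ, 0 ≤ n →
      (∀ x ∈ KMWcomp F n, ∀ y ∈ KMWcomp F n, kmq F x = kmq F y → x = y) ∧
      (∀ z ∈ KMcomp F n, ∃ x ∈ KMWcomp F n, kmq F x = z)) ∧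
    (∀ n : ℤ, n < 0 →
      (∀ x ∈ KMWcomp F n, ∀ y ∈ KMWcomp F n, kwq F x = kwq F y → x = y) ∧
      (∀ z ∈ KWcomp F n, ∃ x ∈ KMWcomp F n, kwq F x = z)) := by
  constructor
  · intro n hn
    constructor
    · intro x hx y hy hxy
      have h := congrArg (MWProof.sKM hsq) hxy
      rw [MWProof.sKM_kmq, MWProof.sKM_kmq, MWProof.phi_fix hsq hn hx,
        MWProof.phi_fix hsq hn hy] at h
      exact h
    · rintro z ⟨x, hx, rfl⟩
      exact ⟨x, hx, rfl⟩
  · intro n hn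
    constructor
    · intro x hx y hy hxy
      obtain ⟨a, rfl⟩ := MWProof.comp_neg hn hx hsq
      obtain ⟨b, rfl⟩ := MWProof.comp_neg hn hy hsq
      set k := n.natAbs with hkdef
      have hk : 1 ≤ k := by omega
      have h := congrArg (MWProof.chiKW F) hxy
      rw [MWProof.chiKW_kwq, MWProof.chiKW_kwq, map_zsmul, map_zsmul, map_pow,
        MWProof.chi_eta] at h
      have hco := congrArg (fun p => Polynomial.coeff p k) h
      simp only [Polynomial.coeff_smul, Polynomial.coeff_X_pow, if_pos rfl,
        smul_eq_mul] at hco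
      -- hco : (a : ZMod 2) * 1 = (b : ZMod 2) * 1 roughly
      have hab : ((a - b : ℤ) : ZMod 2) = 0 := by
        push_cast
        rw [sub_eq_zero]
        simpa using hco
      obtain ⟨c, hc⟩ := (ZMod.intCast_zmod_eq_zero_iff_dvd (a - b) 2).mp hab
      have hc' : a - b = 2 * c := by rw [hc]; norm_num
      have hzero : (a - b) • mweta F ^ k = 0 := by
        rw [hc', mul_comm, mul_smul, MWProof.two_eta_pow hsq k hk, smul_zero]
      have hsub : a • mweta F ^ k - b • mweta F ^ k = 0 := by
        rw [← sub_smul]; exact hzero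
      exact sub_eq_zero.mp hsub
    · rintro z ⟨x, hx, rfl⟩
      exact ⟨x, hx, rfl⟩
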